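/- arXiv:1711.00890 — 3 statements merged into one kernel-verified Lean document; each statement's English description precedes it below -/
import Mathlib

section
/- Let $T : \mathcal{S} \to V$ be a $\sigma$-additive set function on a $\delta$-ring $\mathcal{S}$ with values in a finite-dimensional normed space $V$. Then the total variation $|T|$ is a finite (i.e. $[0,\infty)$-valued) pre-measure on $\mathcal{S}$, i.e. $|T|(\emptyset)=0$, $|T|$ is $\sigma$-additive, and $|T|(A) < \infty$ for all $A \in \mathcal{S}$. -/
open Set
open MeasureTheory
open scoped NNReal ENNReal


lemma aux_hasSum_ofReal_norm_le {ι V : Type*} [NormedAddCommGroup V] {a : ι → V} {v : V}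
    (h : HasSum a v) : ENNReal.ofReal ‖v‖ ≤ ∑' n, ENNReal.ofReal ‖a n‖ := by
  simp only [ofReal_norm, enorm_eq_nnnorm]
  by_cases htop : ∑' n, (‖a n‖₊ : ℝ≥0∞) = ⊤
  · simp [htop]
  · have hs : Summable fun n => ‖a n‖₊ := ENNReal.tsum_coe_ne_top_iff_summable.mp htop
    have hs' : Summable fun n => ‖a n‖ := by
      simpa using NNReal.summable_coe.mpr hs
    have h1 : ‖v‖ ≤ ∑' n, ‖a n‖ := by
      rw [h.tsum_eq.symm] at *
      exact norm_tsum_le_tsum_norm hs'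
    have h2 : ‖v‖₊ ≤ ∑' n, ‖a n‖₊ := by
      rw [← NNReal.coe_le_coe, NNReal.coe_tsum]
      simpa using h1
    calc (‖v‖₊ : ℝ≥0∞) ≤ ((∑' n, ‖a n‖₊ : ℝ≥0) : ℝ≥0∞) := ENNReal.coe_le_coe.mpr h2
      _ = ∑' n, (‖a n‖₊ : ℝ≥0∞) := ENNReal.coe_tsum hs

lemma aux_abs_le_totalVariation {α : Type*} [MeasurableSpace α] (σ : SignedMeasure α)
    {s : Set α} (hs : MeasurableSet s) :
    ENNReal.ofReal |σ s| ≤ σ.totalVariation s := by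
  set j := σ.toJordanDecomposition with hj
  have hσ : σ s = (j.posPart s).toReal - (j.negPart s).toReal := by
    conv_lhs => rw [← σ.toSignedMeasure_toJordanDecomposition]
    rw [← hj, MeasureTheory.JordanDecomposition.toSignedMeasure,
      Measure.toSignedMeasure_sub_apply hs]
    rfl
  rw [hσ, SignedMeasure.totalVariation, Measure.add_apply]
  have h1 : |(j.posPart s).toReal - (j.negPart s).toReal| ≤
      (j.posPart s).toReal + (j.negPart s).toReal :=
    (abs_sub _ _).trans (by simp [abs_of_nonneg ENNReal.toReal_nonneg])
  calc ENNReal.ofReal |(j.posPart s).toReal - (j.negPart s).toReal|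
      ≤ ENNReal.ofReal ((j.posPart s).toReal + (j.negPart s).toReal) := ENNReal.ofReal_le_ofReal h1
    _ ≤ ENNReal.ofReal (j.posPart s).toReal + ENNReal.ofReal (j.negPart s).toReal :=
        ENNReal.ofReal_add_le
    _ = j.posPart s + j.negPart s := by
        rw [ENNReal.ofReal_toReal (measure_ne_top _ _), ENNReal.ofReal_toReal (measure_ne_top _ _)]

lemma aux_bound {S V : Type*} [NormedAddCommGroup V] [NormedSpace ℝ V]
    [FiniteDimensional ℝ V]
    (𝒮 : Set (Set S))
    (hempty : ∅ ∈ 𝒮)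
    (hdiff : ∀ A ∈ 𝒮, ∀ B ∈ 𝒮, A \ B ∈ 𝒮)
    (hinter : ∀ f : ℕ → Set S, (∀ n, f n ∈ 𝒮) → (⋂ n, f n) ∈ 𝒮)
    (T : Set S → V)
    (hT0 : T ∅ = 0)
    (hTσ : ∀ f : ℕ → Set S, (∀ n, f n ∈ 𝒮) → Pairwise (Function.onFun Disjoint f) →
      (⋃ n, f n) ∈ 𝒮 → HasSum (fun n => T (f n)) (T (⋃ n, f n)))
    {A : Set S} (hA : A ∈ 𝒮) :
    ∃ C : ℝ≥0∞, C ≠ ⊤ ∧ ∀ (n : ℕ) (g : Fin n → Set S),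
      (∀ j, g j ∈ 𝒮 ∧ g j ⊆ A) → Pairwise (Function.onFun Disjoint g) →
      (∑ j, ENNReal.ofReal ‖T (g j)‖) ≤ C := by
  classical
  -- countable unions of members of 𝒮 inside A stay in 𝒮
  have hsub_union : ∀ (B : ℕ → Set S), (∀ n, B n ∈ 𝒮) → (∀ n, B n ⊆ A) → (⋃ n, B n) ∈ 𝒮 := by
    intro B hB hBA
    have hEq : (⋃ n, B n) = A \ (⋂ n, A \ B n) := by
      ext x
      simp only [mem_iUnion, mem_diff, mem_iInter, not_forall, not_and, not_not]
      constructor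
      · rintro ⟨n, hn⟩
        exact ⟨hBA n hn, ⟨n, fun _ => hn⟩⟩
      · rintro ⟨hxA, n, hn⟩
        exact ⟨n, hn hxA⟩
    rw [hEq]
    exact hdiff A hA _ (hinter _ fun n => hdiff A hA _ (hB n))
  letI mA : MeasurableSpace ↥A :=
    { MeasurableSet' := fun s => (Subtype.val '' s) ∈ 𝒮
      measurableSet_empty := by simpa using hempty
      measurableSet_compl := by
        intro s hs
        have hEq : (Subtype.val '' sᶜ : Set S) = A \ (Subtype.val '' s) := by
          ext x
          constructor
          · rintro ⟨y, hy, rfl⟩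
            refine ⟨y.2, ?_⟩
            rintro ⟨z, hz, hzx⟩
            exact hy (by rwa [Subtype.val_injective hzx] at hz)
          · rintro ⟨hxA, hx⟩
            exact ⟨⟨x, hxA⟩, fun hmem => hx ⟨⟨x, hxA⟩, hmem, rfl⟩, rfl⟩
        show (Subtype.val '' sᶜ) ∈ 𝒮
        rw [hEq]
        exact hdiff A hA _ hs
      measurableSet_iUnion := by
        intro f hf
        show (Subtype.val '' ⋃ n, f n) ∈ 𝒮
        rw [image_iUnion]
        exact hsub_union _ hf fun n => Subtype.coe_image_subset A (f n) }
  have hms : ∀ s : Set ↥A, MeasurableSet s ↔ (Subtype.val '' s) ∈ 𝒮 := fun s => Iff.rfl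
  let μ : VectorMeasure ↥A V :=
    { measureOf' := fun s => if (Subtype.val '' s) ∈ 𝒮 then T (Subtype.val '' s) else 0
      empty' := by simp [hT0, hempty]
      not_measurable' := fun s hs => if_neg hs
      m_iUnion' := by
        intro f hf hd
        have hmem : ∀ n, (Subtype.val '' f n) ∈ 𝒮 := hf
        have hdis : Pairwise (Function.onFun Disjoint fun n => (Subtype.val '' f n : Set S)) :=
          fun i j hij => Set.disjoint_image_of_injective Subtype.val_injective (hd hij)
        have hU : (⋃ n, (Subtype.val '' f n : Set S)) ∈ 𝒮 :=
          hsub_union _ hmem fun n => Subtype.coe_image_subset A (f n)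
        have key := hTσ _ hmem hdis hU
        have hUeq : (Subtype.val '' ⋃ n, f n : Set S) = ⋃ n, (Subtype.val '' f n) :=
          image_iUnion
        have h1 : (fun n => if (Subtype.val '' f n) ∈ 𝒮 then T (Subtype.val '' f n) else 0)
            = fun n => T (Subtype.val '' f n) := funext fun n => if_pos (hmem n)
        show HasSum (fun n => if (Subtype.val '' f n) ∈ 𝒮 then T (Subtype.val '' f n) else 0)
          (if (Subtype.val '' (⋃ n, f n)) ∈ 𝒮 then T (Subtype.val '' (⋃ n, f n)) else 0)
        rw [h1, hUeq, if_pos hU]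
        exact key }
  have hμ_apply : ∀ s : Set ↥A, (Subtype.val '' s) ∈ 𝒮 → μ s = T (Subtype.val '' s) :=
    fun s hs => if_pos hs
  -- basis and coordinate signed measures
  let b : Module.Basis (Fin (Module.finrank ℝ V)) ℝ V := Module.finBasis ℝ V
  let σ : Fin (Module.finrank ℝ V) → SignedMeasure ↥A := fun i =>
    μ.mapRange (b.coord i).toAddMonoidHom (b.coord i).continuous_of_finiteDimensional
  refine ⟨∑ i, ENNReal.ofReal ‖b i‖ * (σ i).totalVariation univ, ?_, ?_⟩
  · refine (ENNReal.sum_lt_top.mpr fun i _ => ?_).ne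
    refine ENNReal.mul_lt_top ENNReal.ofReal_lt_top ?_
    rw [SignedMeasure.totalVariation, Measure.add_apply]
    exact ENNReal.add_lt_top.mpr ⟨measure_lt_top _ _, measure_lt_top _ _⟩
  · intro n g hg hdisj
    set s : Fin n → Set ↥A := fun j => Subtype.val ⁻¹' g j with hs_def
    have himg : ∀ j, (Subtype.val '' s j : Set S) = g j := by
      intro j
      rw [hs_def]
      rw [Subtype.image_preimage_coe]
      exact inter_eq_self_of_subset_right (hg j).2
    have hmeas : ∀ j, MeasurableSet (s j) := by
      intro j
      rw [hms, himg j]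
      exact (hg j).1
    have hdis : Pairwise (Function.onFun Disjoint s) :=
      fun i j hij => Disjoint.preimage _ (hdisj hij)
    have hμs : ∀ j, μ (s j) = T (g j) := by
      intro j
      rw [hμ_apply (s j) (by rw [himg j]; exact (hg j).1), himg j]
    -- pointwise norm bound via basis coordinates
    have hnorm : ∀ v : V, ‖v‖ ≤ ∑ i, ‖b i‖ * |b.repr v i| := by
      intro v
      calc ‖v‖ = ‖∑ i, b.repr v i • b i‖ := by rw [b.sum_repr]
        _ ≤ ∑ i, ‖b.repr v i • b i‖ := norm_sum_le _ _
        _ = ∑ i, ‖b i‖ * |b.repr v i| := by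
            simp [norm_smul, Real.norm_eq_abs, mul_comm]
    have hσ_apply : ∀ i j, (σ i) (s j) = b.repr (T (g j)) i := by
      intro i j
      show (b.coord i).toAddMonoidHom (μ (s j)) = _
      rw [hμs j]
      rfl
    calc (∑ j, ENNReal.ofReal ‖T (g j)‖)
        ≤ ∑ j, ENNReal.ofReal (∑ i, ‖b i‖ * |b.repr (T (g j)) i|) :=
          Finset.sum_le_sum fun j _ => ENNReal.ofReal_le_ofReal (hnorm _)
      _ ≤ ∑ j, ∑ i, ENNReal.ofReal (‖b i‖ * |b.repr (T (g j)) i|) :=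
          Finset.sum_le_sum fun j _ => le_of_eq (ENNReal.ofReal_sum_of_nonneg fun i _ => by positivity)
      _ = ∑ i, ∑ j, ENNReal.ofReal (‖b i‖ * |b.repr (T (g j)) i|) := Finset.sum_comm
      _ ≤ ∑ i, ENNReal.ofReal ‖b i‖ * (σ i).totalVariation univ := by
          refine Finset.sum_le_sum fun i _ => ?_
          have : ∀ j : Fin n, ENNReal.ofReal (‖b i‖ * |b.repr (T (g j)) i|) =
              ENNReal.ofReal ‖b i‖ * ENNReal.ofReal |(σ i) (s j)| := by
            intro j
            rw [hσ_apply i j, ENNReal.ofReal_mul (norm_nonneg _)]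
          simp only [this]
          rw [← Finset.mul_sum]
          refine mul_le_mul_right ?_ _
          calc (∑ j, ENNReal.ofReal |(σ i) (s j)|)
              ≤ ∑ j, (σ i).totalVariation (s j) :=
                Finset.sum_le_sum fun j _ => aux_abs_le_totalVariation _ (hmeas j)
            _ = (σ i).totalVariation (⋃ j, s j) := by
                rw [measure_iUnion hdis hmeas, tsum_fintype]
            _ ≤ (σ i).totalVariation univ := measure_mono (subset_univ _)
/-- For a σ-additive set function `T` on a δ-ring with values in a finite-dimensional
normed space, the total variation `|T|` is a finite pre-measure. -/
theorem stmt_5 {S : Type*} {V : Type*} [NormedAddCommGroup V] [NormedSpace ℝ V]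
    [FiniteDimensional ℝ V]
    (𝒮 : Set (Set S))
    (hempty : ∅ ∈ 𝒮)
    (hunion : ∀ A ∈ 𝒮, ∀ B ∈ 𝒮, A ∪ B ∈ 𝒮)
    (hdiff : ∀ A ∈ 𝒮, ∀ B ∈ 𝒮, A \ B ∈ 𝒮)
    (hinter : ∀ f : ℕ → Set S, (∀ n, f n ∈ 𝒮) → (⋂ n, f n) ∈ 𝒮)
    (hcov : ∃ f : ℕ → Set S, (∀ n, f n ∈ 𝒮) ∧ (⋃ n, f n) = univ)
    (T : Set S → V)
    (hT0 : T ∅ = 0)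
    (hTσ : ∀ f : ℕ → Set S, (∀ n, f n ∈ 𝒮) → Pairwise (Function.onFun Disjoint f) →
      (⋃ n, f n) ∈ 𝒮 → HasSum (fun n => T (f n)) (T (⋃ n, f n)))
    (tv : Set S → ENNReal)
    (htv : ∀ A, tv A = sSup {x : ENNReal | ∃ (n : ℕ) (g : Fin n → Set S),
      (∀ j, g j ∈ 𝒮 ∧ g j ⊆ A) ∧ Pairwise (Function.onFun Disjoint g) ∧
      x = ∑ j, (ENNReal.ofReal ‖T (g j)‖)}) :
    tv ∅ = 0 ∧
    (∀ f : ℕ → Set S, (∀ n, f n ∈ 𝒮) → Pairwise (Function.onFun Disjoint f) →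
      (⋃ n, f n) ∈ 𝒮 → tv (⋃ n, f n) = ∑' n, tv (f n)) ∧
    (∀ A ∈ 𝒮, tv A < ⊤) := by
  classical
  -- 0 belongs to every defining set
  have hmem0 : ∀ A : Set S, (0 : ℝ≥0∞) ∈ {x : ℝ≥0∞ | ∃ (n : ℕ) (g : Fin n → Set S),
      (∀ j, g j ∈ 𝒮 ∧ g j ⊆ A) ∧ Pairwise (Function.onFun Disjoint g) ∧
      x = ∑ j, (ENNReal.ofReal ‖T (g j)‖)} := by
    intro A
    exact ⟨0, Fin.elim0, fun j => j.elim0, by intro i; exact i.elim0, by simp⟩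
  -- tv of the empty set
  have h0 : tv ∅ = 0 := by
    rw [htv]
    refine le_antisymm (sSup_le ?_) zero_le
    rintro x ⟨n, g, hg, -, rfl⟩
    have hgj : ∀ j, g j = ∅ := fun j => subset_empty_iff.mp (hg j).2
    simp [hgj, hT0]
  -- monotonicity
  have hmono : ∀ A B : Set S, A ⊆ B → tv A ≤ tv B := by
    intro A B hAB
    rw [htv A, htv B]
    refine sSup_le ?_
    rintro x ⟨n, g, hg, hd, rfl⟩
    exact le_sSup ⟨n, g, fun j => ⟨(hg j).1, (hg j).2.trans hAB⟩, hd, rfl⟩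
  -- superadditivity for two disjoint sets
  have hsuper : ∀ A B : Set S, Disjoint A B → tv A + tv B ≤ tv (A ∪ B) := by
    intro A B hAB
    rw [htv A, htv B]
    haveI h1 : Nonempty ↥{x : ℝ≥0∞ | ∃ (n : ℕ) (g : Fin n → Set S),
        (∀ j, g j ∈ 𝒮 ∧ g j ⊆ A) ∧ Pairwise (Function.onFun Disjoint g) ∧
        x = ∑ j, (ENNReal.ofReal ‖T (g j)‖)} := Set.Nonempty.to_subtype ⟨0, hmem0 A⟩
    haveI h2 : Nonempty ↥{x : ℝ≥0∞ | ∃ (n : ℕ) (g : Fin n → Set S),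
        (∀ j, g j ∈ 𝒮 ∧ g j ⊆ B) ∧ Pairwise (Function.onFun Disjoint g) ∧
        x = ∑ j, (ENNReal.ofReal ‖T (g j)‖)} := Set.Nonempty.to_subtype ⟨0, hmem0 B⟩
    rw [sSup_eq_iSup', sSup_eq_iSup']
    refine ENNReal.iSup_add_iSup_le ?_
    rintro ⟨x, m, g, hg, hdg, hx⟩ ⟨y, k, h, hh, hdh, hy⟩
    rw [htv (A ∪ B)]
    refine le_sSup ⟨m + k, Fin.append g h, ?_, ?_, ?_⟩
    · intro j
      refine Fin.addCases (fun i => ?_) (fun i => ?_) j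
      · rw [Fin.append_left]
        exact ⟨(hg i).1, (hg i).2.trans subset_union_left⟩
      · rw [Fin.append_right]
        exact ⟨(hh i).1, (hh i).2.trans subset_union_right⟩
    · have hcases : ∀ j : Fin (m + k),
          (∃ i, j = Fin.castAdd k i) ∨ (∃ i, j = Fin.natAdd m i) := fun j =>
        Fin.addCases (fun i => Or.inl ⟨i, rfl⟩) (fun i => Or.inr ⟨i, rfl⟩) j
      intro i j hij
      rcases hcases i with ⟨i', rfl⟩ | ⟨i', rfl⟩ <;> rcases hcases j with ⟨j', rfl⟩ | ⟨j', rfl⟩ <;>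
        simp only [Function.onFun, Fin.append_left, Fin.append_right]
      · exact hdg fun hc => hij (congrArg _ hc)
      · exact Disjoint.mono (hg i').2 (hh j').2 hAB
      · exact (Disjoint.mono (hg j').2 (hh i').2 hAB).symm
      · exact hdh fun hc => hij (congrArg _ hc)
    · rw [Fin.sum_univ_add]
      simp only [Fin.append_left, Fin.append_right]
      rw [← hx, ← hy]
  refine ⟨h0, ?_, ?_⟩
  · -- σ-additivity
    intro f hf hd hU
    refine le_antisymm ?_ ?_
    · -- tv (⋃ f) ≤ ∑' tv (f n)
      rw [htv (⋃ n, f n)]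
      refine sSup_le ?_
      rintro x ⟨m, g, hg, hdg, rfl⟩
      have hjn : ∀ (j : Fin m) (n : ℕ), g j ∩ f n ∈ 𝒮 := by
        intro j n
        rw [← diff_diff_right_self]
        exact hdiff _ (hg j).1 _ (hdiff _ (hg j).1 _ (hf n))
      have hUj : ∀ j : Fin m, (⋃ n, g j ∩ f n) = g j := by
        intro j
        rw [← inter_iUnion]
        exact inter_eq_self_of_subset_left (hg j).2
      have hkey : ∀ j : Fin m,
          ENNReal.ofReal ‖T (g j)‖ ≤ ∑' n, ENNReal.ofReal ‖T (g j ∩ f n)‖ := by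
        intro j
        have hsum := hTσ (fun n => g j ∩ f n) (hjn j)
          (fun a b hab => (hd hab).mono inter_subset_right inter_subset_right)
          (by rw [hUj j]; exact (hg j).1)
        rw [hUj j] at hsum
        exact aux_hasSum_ofReal_norm_le hsum
      calc (∑ j, ENNReal.ofReal ‖T (g j)‖)
          ≤ ∑ j, ∑' n, ENNReal.ofReal ‖T (g j ∩ f n)‖ :=
            Finset.sum_le_sum fun j _ => hkey j
        _ = ∑' n, ∑ j, ENNReal.ofReal ‖T (g j ∩ f n)‖ :=
            (Summable.tsum_finsetSum fun j _ => ENNReal.summable).symm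
        _ ≤ ∑' n, tv (f n) := by
            refine ENNReal.tsum_le_tsum fun n => ?_
            rw [htv (f n)]
            exact le_sSup ⟨m, fun j => g j ∩ f n,
              fun j => ⟨hjn j n, inter_subset_right⟩,
              fun a b hab => (hdg hab).mono inter_subset_left inter_subset_left, rfl⟩
    · -- ∑' tv (f n) ≤ tv (⋃ f)
      rw [ENNReal.tsum_eq_iSup_sum]
      refine iSup_le fun t => ?_
      have key : (⋃ n ∈ t, f n) ∈ 𝒮 ∧ (∑ n ∈ t, tv (f n)) ≤ tv (⋃ n ∈ t, f n) := by
        induction t using Finset.induction_on with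
        | empty => exact ⟨by simpa using hempty, by simp⟩
        | @insert a t ha ih =>
          have hUeq : (⋃ n ∈ insert a t, f n) = f a ∪ ⋃ n ∈ t, f n :=
            Finset.set_biUnion_insert a t f
          have hdisj : Disjoint (f a) (⋃ n ∈ t, f n) := by
            refine Set.disjoint_iUnion₂_right.mpr fun n hn => ?_
            exact hd fun hc => ha (hc ▸ hn)
          constructor
          · rw [hUeq]; exact hunion _ (hf a) _ ih.1
          · rw [Finset.sum_insert ha, hUeq]
            calc tv (f a) + ∑ n ∈ t, tv (f n) ≤ tv (f a) + tv (⋃ n ∈ t, f n) :=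
                add_le_add_right ih.2 _
              _ ≤ tv (f a ∪ ⋃ n ∈ t, f n) := hsuper _ _ hdisj
      exact key.2.trans (hmono _ _ (iUnion₂_subset fun n _ => subset_iUnion f n))
  · -- finiteness
    intro A hA
    obtain ⟨C, hC, hb⟩ := aux_bound 𝒮 hempty hdiff hinter T hT0 hTσ hA
    rw [htv A]
    refine lt_of_le_of_lt (sSup_le ?_) hC.lt_top
    rintro x ⟨n, g, hg, hdg, rfl⟩
    exact hb n g hg hdg
end

section
/- For $g(y) := \sin(y)/y$ ($y \ne 0$), $g(0) := 1$, and any $\delta, \gamma > 0$, there exists a constant $C(\delta,\gamma) \in (0,1)$ such that $1 - \prod_{j=1}^m g(\delta x_j) \ge C(\delta,\gamma)$ for every $x = (x_1,\dots,x_m) \in \mathbb{R}^m$ with $\|x\| \ge \gamma$. -/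
open Set

lemma sin_div_even (y : ℝ) (hy : y ≠ 0) : Real.sin y / y = Real.sin |y| / |y| := by
  rcases abs_cases y with ⟨h, _⟩ | ⟨h, _⟩
  · rw [h]
  · rw [h, Real.sin_neg, neg_div_neg_eq]

lemma abs_sin_div_le_one (y : ℝ) : |Real.sin y / y| ≤ 1 := by
  rcases eq_or_ne y 0 with rfl | hy
  · simp
  · rw [abs_div, div_le_one (abs_pos.2 hy)]
    exact Real.abs_sin_le_abs

lemma key (a : ℝ) (ha : 0 < a) :
    ∃ r : ℝ, 1/2 ≤ r ∧ r < 1 ∧ ∀ y : ℝ, a ≤ |y| → |Real.sin y / y| ≤ r := by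
  set b := min a 2 with hbdef
  have hb : 0 < b := lt_min ha two_pos
  have hb2 : b ≤ 2 := min_le_right _ _
  have hne : (Icc b 2).Nonempty := ⟨b, le_refl b, hb2⟩
  have hcont : ContinuousOn (fun y : ℝ => Real.sin y / y) (Icc b 2) := by
    apply ContinuousOn.div Real.continuous_sin.continuousOn continuousOn_id
    intro y hy; exact ne_of_gt (lt_of_lt_of_le hb hy.1)
  obtain ⟨y0, hy0, hmax⟩ := isCompact_Icc.exists_isMaxOn hne hcont
  have hy0pos : 0 < y0 := lt_of_lt_of_le hb hy0.1
  have hr0lt : Real.sin y0 / y0 < 1 := by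
    rw [div_lt_one hy0pos]; exact Real.sin_lt hy0pos
  refine ⟨max (Real.sin y0 / y0) (1/2), le_max_right _ _, max_lt hr0lt (by norm_num), ?_⟩
  intro y hy
  have hyne : y ≠ 0 := by
    intro h; rw [h] at hy; simp at hy; linarith
  rw [sin_div_even y hyne]
  set t := |y| with htdef
  have ht : 0 < t := abs_pos.2 hyne
  rcases le_or_gt t 2 with h2 | h2
  · have htI : t ∈ Icc b 2 := ⟨le_trans (min_le_left a 2) hy, h2⟩
    have hsinpos : 0 < Real.sin t := Real.sin_pos_of_pos_of_lt_pi ht (lt_of_le_of_lt h2 (by linarith [Real.pi_gt_three]))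
    rw [abs_of_pos (div_pos hsinpos ht)]
    exact le_trans (hmax htI) (le_max_left _ _)
  · rw [abs_div, abs_of_pos ht]
    refine le_trans ?_ (le_max_right _ _)
    rw [div_le_div_iff₀ ht (by norm_num)]
    calc |Real.sin t| * 2 ≤ 1 * 2 := by nlinarith [abs_le.2 ⟨Real.neg_one_le_sin t, Real.sin_le_one t⟩]
    _ ≤ 1 * t := by nlinarith


/-- For `g(y) = sin y / y` (`g(0) = 1`) and `δ, γ > 0`, there is `C ∈ (0,1)` with
`1 - ∏ⱼ g(δ xⱼ) ≥ C` whenever `‖x‖ ≥ γ`. -/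
theorem stmt_12 {m : ℕ} (g : ℝ → ℝ)
    (hg : ∀ y : ℝ, g y = if y = 0 then 1 else Real.sin y / y)
    (δ γ : ℝ) (hδ : 0 < δ) (hγ : 0 < γ) :
    ∃ C ∈ Ioo (0 : ℝ) 1, ∀ x : EuclideanSpace ℝ (Fin m),
      γ ≤ ‖x‖ → C ≤ 1 - ∏ j, g (δ * x j) := by
  have habsg : ∀ y : ℝ, |g y| ≤ 1 := by
    intro y; rw [hg]
    split
    · simp
    · exact abs_sin_div_le_one y
  rcases Nat.eq_zero_or_pos m with rfl | hm
  · refine ⟨1/2, by norm_num, ?_⟩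
    intro x hx
    exfalso
    have : ‖x‖ = 0 := by
      rw [EuclideanSpace.norm_eq]; simp
    linarith
  have hmpos : (0:ℝ) < Real.sqrt m := Real.sqrt_pos.2 (by exact_mod_cast hm)
  set a := δ * (γ / Real.sqrt m) with hadef
  have ha : 0 < a := mul_pos hδ (div_pos hγ hmpos)
  obtain ⟨r, hr12, hr1, hr⟩ := key a ha
  refine ⟨1 - r, ⟨by linarith, by linarith⟩, ?_⟩
  intro x hx
  -- find a big coordinate
  have hbig : ∃ j : Fin m, γ / Real.sqrt m ≤ |x j| := by
    by_contra h
    push_neg at h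
    have hlt : ‖x‖ < γ := by
      rw [EuclideanSpace.norm_eq]
      have hsum : ∑ i, ‖x i‖ ^ 2 < γ ^ 2 := by
        have : ∑ i, ‖x i‖ ^ 2 < ∑ _i : Fin m, (γ / Real.sqrt m) ^ 2 := by
          apply Finset.sum_lt_sum_of_nonempty
          · have : Nonempty (Fin m) := ⟨⟨0, hm⟩⟩
            exact Finset.univ_nonempty
          · intro i _
            have h1 : ‖x i‖ < γ / Real.sqrt m := by
              rw [Real.norm_eq_abs]; exact h i
            have h0 : (0:ℝ) ≤ ‖x i‖ := norm_nonneg _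
            nlinarith
        rw [Finset.sum_const, Finset.card_univ, Fintype.card_fin, nsmul_eq_mul] at this
        have hsq : (m : ℝ) * (γ / Real.sqrt m) ^ 2 = γ ^ 2 := by
          rw [div_pow, Real.sq_sqrt (by positivity : (0:ℝ) ≤ (m:ℝ))]
          field_simp
        linarith
      calc Real.sqrt (∑ i, ‖x i‖ ^ 2) < Real.sqrt (γ ^ 2) := by
            apply Real.sqrt_lt_sqrt (by positivity) hsum
        _ = γ := Real.sqrt_sq hγ.le
    linarith
  obtain ⟨j0, hj0⟩ := hbig
  have hxj0 : x j0 ≠ 0 := by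
    intro h; rw [h] at hj0; simp at hj0
    have := div_pos hγ hmpos; linarith
  have hfac : |g (δ * x j0)| ≤ r := by
    rw [hg]
    rw [if_neg (by exact mul_ne_zero hδ.ne' hxj0)]
    apply hr
    rw [abs_mul, abs_of_pos hδ, hadef]
    exact mul_le_mul_of_nonneg_left hj0 hδ.le
  have hprod : |∏ j, g (δ * x j)| ≤ r := by
    rw [Finset.abs_prod]
    rw [← Finset.mul_prod_erase Finset.univ _ (Finset.mem_univ j0)]
    calc |g (δ * x j0)| * ∏ j ∈ Finset.univ.erase j0, |g (δ * x j)|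
        ≤ r * 1 := by
          apply mul_le_mul hfac ?_ ?_ (by linarith)
          · exact Finset.prod_le_one (fun i _ => abs_nonneg _) (fun i _ => habsg _)
          · exact Finset.prod_nonneg (fun i _ => abs_nonneg _)
      _ = r := mul_one r
  have := neg_abs_le (∏ j, g (δ * x j))
  have h2 := le_abs_self (∏ j, g (δ * x j))
  linarith
end

section
/- Let $X$ be an $\mathbb{R}^m$-valued random vector with characteristic function $\varphi$, and let $h(y) := \|y\|\cdot \mathbf{1}_{\{\|y\| \le 1\}}$. Then for every $t \in \mathbb{R}^m$: $|1 - \varphi(t)| \le \tfrac{\|t\|^2}{2}\,\mathrm{Var}(h(X)) + \left(\tfrac{\|t\|^2}{2} + \|t\|\right) \mathbb{E}[h(X)] + 2\,\mathbb{P}(\|X\| > 1)$. -/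
open MeasureTheory RealInnerProductSpace

lemma abs_one_sub_exp_I_mul_le (u : ℝ) :
    ‖1 - Complex.exp (Complex.I * u)‖ ≤ |u| := by
  have hsq : ‖1 - Complex.exp (Complex.I * u)‖ ^ 2 ≤ u ^ 2 := by
    rw [Complex.sq_norm, mul_comm, Complex.exp_mul_I, ← Complex.ofReal_cos,
      ← Complex.ofReal_sin]
    have h1 : Real.sin (u / 2) ^ 2 = 1 / 2 - Real.cos u / 2 := by
      have := Real.cos_sq (u / 2)
      have h2 : Real.sin (u / 2) ^ 2 = 1 - Real.cos (u / 2) ^ 2 := Real.sin_sq _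
      rw [h2, this]
      ring_nf
    have h3 : Real.sin (u / 2) ^ 2 ≤ (u / 2) ^ 2 := Real.sin_sq_le_sq
    have hns : ∀ c s : ℝ, Complex.normSq (1 - (↑c + ↑s * Complex.I)) =
        1 - 2 * c + c ^ 2 + s ^ 2 := by
      intro c s
      simp [Complex.normSq_apply]
      ring
    rw [hns]
    nlinarith [Real.sin_sq_add_cos_sq u]
  calc ‖1 - Complex.exp (Complex.I * u)‖
      = Real.sqrt (‖1 - Complex.exp (Complex.I * u)‖ ^ 2) :=
        (Real.sqrt_sq (norm_nonneg _)).symm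
    _ ≤ Real.sqrt (u ^ 2) := Real.sqrt_le_sqrt hsq
    _ = |u| := Real.sqrt_sq_eq_abs u

/-- Estimate for `|1 - φ(t)|` in terms of the truncated first and second moments of
`X` and the tail probability `P(‖X‖ > 1)`. -/
theorem stmt_19 {Ω : Type*} [MeasureSpace Ω] [IsProbabilityMeasure (volume : Measure Ω)]
    {m : ℕ} (X : Ω → EuclideanSpace ℝ (Fin m)) (hX : Measurable X)
    (φ : EuclideanSpace ℝ (Fin m) → ℂ)
    (hφ : ∀ t, φ t = ∫ ω, Complex.exp (Complex.I * (⟪t, X ω⟫ : ℝ)))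
    (h : EuclideanSpace ℝ (Fin m) → ℝ)
    (hh : ∀ y, h y = if ‖y‖ ≤ 1 then ‖y‖ else 0) :
    ∀ t, ‖1 - φ t‖ ≤
      ‖t‖ ^ 2 / 2 * ((∫ ω, (h (X ω)) ^ 2) - (∫ ω, h (X ω)) ^ 2) +
      (‖t‖ ^ 2 / 2 + ‖t‖) * (∫ ω, h (X ω)) +
      2 * (volume {ω | 1 < ‖X ω‖}).toReal := by
  intro t
  have hmu : Measurable fun ω => (⟪t, X ω⟫ : ℝ) := (measurable_const : Measurable fun _ : Ω => t).inner hX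
  have hmexp : Measurable fun ω => Complex.exp (Complex.I * (⟪t, X ω⟫ : ℝ)) :=
    (measurable_const.mul (Complex.measurable_ofReal.comp hmu)).cexp
  have hbexp : ∀ ω, ‖Complex.exp (Complex.I * (⟪t, X ω⟫ : ℝ))‖ = 1 := by
    intro ω
    rw [Complex.norm_exp]
    simp
  have hiexp : Integrable (fun ω => Complex.exp (Complex.I * (⟪t, X ω⟫ : ℝ))) := by
    refine (integrable_const (1 : ℝ)).mono' hmexp.aestronglyMeasurable ?_
    filter_upwards with ω using le_of_eq (hbexp ω)
  have hmhX : Measurable fun ω => h (X ω) := by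
    simp only [hh]
    exact Measurable.ite (measurableSet_le hX.norm measurable_const) hX.norm measurable_const
  have hh_nonneg : ∀ ω, 0 ≤ h (X ω) := by
    intro ω; rw [hh]; split <;> positivity
  have hh_le_one : ∀ ω, h (X ω) ≤ 1 := by
    intro ω; rw [hh]; split
    · assumption
    · norm_num
  have hihX : Integrable (fun ω => h (X ω)) := by
    refine (integrable_const (1 : ℝ)).mono' hmhX.aestronglyMeasurable ?_
    filter_upwards with ω
    rw [Real.norm_eq_abs, abs_of_nonneg (hh_nonneg ω)]
    exact hh_le_one ω
  have hS : MeasurableSet {ω | 1 < ‖X ω‖} := measurableSet_lt measurable_const hX.norm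
  have hiInd : Integrable ({ω | 1 < ‖X ω‖}.indicator fun _ => (2 : ℝ)) :=
    (integrable_const (2 : ℝ)).indicator hS
  -- Step 1: rewrite 1 - φ t as an integral
  have hsub : (1 : ℂ) - φ t = ∫ ω, (1 - Complex.exp (Complex.I * (⟪t, X ω⟫ : ℝ))) := by
    rw [hφ, integral_sub (integrable_const 1) hiexp, integral_const]
    simp
  -- Step 2: pointwise bound
  have hpt : ∀ ω, ‖(1 : ℂ) - Complex.exp (Complex.I * (⟪t, X ω⟫ : ℝ))‖ ≤
      ‖t‖ * h (X ω) + {ω | 1 < ‖X ω‖}.indicator (fun _ => (2 : ℝ)) ω := by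
    intro ω
    by_cases hc : ‖X ω‖ ≤ 1
    · have hind : {ω | 1 < ‖X ω‖}.indicator (fun _ => (2 : ℝ)) ω = 0 := by
        apply Set.indicator_of_notMem
        simpa using hc
      rw [hind, add_zero]
      calc ‖(1 : ℂ) - Complex.exp (Complex.I * (⟪t, X ω⟫ : ℝ))‖
          ≤ |(⟪t, X ω⟫ : ℝ)| := abs_one_sub_exp_I_mul_le _
        _ ≤ ‖t‖ * ‖X ω‖ := by
            simpa [Real.norm_eq_abs] using norm_inner_le_norm (𝕜 := ℝ) t (X ω)
        _ = ‖t‖ * h (X ω) := by rw [hh, if_pos hc]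
    · have hind : {ω | 1 < ‖X ω‖}.indicator (fun _ => (2 : ℝ)) ω = 2 := by
        apply Set.indicator_of_mem
        simpa using not_le.mp hc
      rw [hind]
      have : ‖(1 : ℂ) - Complex.exp (Complex.I * (⟪t, X ω⟫ : ℝ))‖ ≤ 2 := by
        calc ‖(1 : ℂ) - Complex.exp (Complex.I * (⟪t, X ω⟫ : ℝ))‖
            ≤ ‖(1 : ℂ)‖ + ‖Complex.exp (Complex.I * (⟪t, X ω⟫ : ℝ))‖ := norm_sub_le _ _
          _ = 2 := by rw [hbexp ω]; norm_num
      have h0 : 0 ≤ ‖t‖ * h (X ω) := mul_nonneg (norm_nonneg t) (hh_nonneg ω)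
      linarith
  -- Step 3: the integral bound
  have key : ‖1 - φ t‖ ≤ ‖t‖ * (∫ ω, h (X ω)) +
      2 * (volume {ω | 1 < ‖X ω‖}).toReal := by
    rw [hsub]
    calc ‖∫ ω, ((1 : ℂ) - Complex.exp (Complex.I * (⟪t, X ω⟫ : ℝ)))‖
        ≤ ∫ ω, ‖(1 : ℂ) - Complex.exp (Complex.I * (⟪t, X ω⟫ : ℝ))‖ :=
          norm_integral_le_integral_norm _
      _ ≤ ∫ ω, (‖t‖ * h (X ω) + {ω | 1 < ‖X ω‖}.indicator (fun _ => (2 : ℝ)) ω) := by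
          refine integral_mono ?_ ((hihX.const_mul _).add hiInd) hpt
          exact ((integrable_const 1).sub hiexp).norm
      _ = ‖t‖ * (∫ ω, h (X ω)) + 2 * (volume {ω | 1 < ‖X ω‖}).toReal := by
          rw [integral_add (hihX.const_mul _) hiInd, integral_const_mul,
            integral_indicator_const _ hS]
          simp [mul_comm, Measure.real]
  -- Step 4: conclude
  have hEh_nonneg : 0 ≤ ∫ ω, h (X ω) := integral_nonneg fun ω => hh_nonneg ω
  have hEh_le_one : (∫ ω, h (X ω)) ≤ 1 := by
    calc (∫ ω, h (X ω)) ≤ ∫ _ω, (1 : ℝ) := integral_mono hihX (integrable_const 1)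
          fun ω => hh_le_one ω
      _ = 1 := by simp
  have hEh2_nonneg : 0 ≤ ∫ ω, (h (X ω)) ^ 2 := integral_nonneg fun ω => sq_nonneg _
  nlinarith [sq_nonneg ‖t‖, mul_nonneg (mul_nonneg hEh_nonneg (sub_nonneg.mpr hEh_le_one))
    (sq_nonneg ‖t‖)]
end
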